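/- Let t be an odd prime, ζ a primitive t-th root of unity, and let l be a prime number different from t such that the class of -1 in (ℤ/tℤ)ˣ lies in the cyclic subgroup generated by the class of l. Then every prime ideal of ℤ[ζ] lying above l is stable under complex conjugation, i.e., if 𝔩 is a prime ideal of ℤ[ζ] with l ∈ 𝔩 and j denotes the complex conjugation automorphism of ℚ(ζ), then j(𝔩) = 𝔩. -/

import Mathlib

open NumberField

set_option maxHeartbeats 1000000
set_option synthInstance.maxHeartbeats 400000

/-- Let `t` be an odd prime, `ζ` a primitive `t`-th root of unity in the
`t`-th cyclotomic field `ℚ(ζ_t)`, and `l ≠ t` a prime such that the class of `-1` in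
`(ℤ/tℤ)ˣ` lies in the cyclic subgroup generated by the class of `l`.  If `j` is the
complex conjugation automorphism of `ℚ(ζ_t)` (the `ℚ`-algebra automorphism sending `ζ` to
`ζ⁻¹`) and `𝔩` is a prime ideal of the ring of integers `ℤ[ζ]` with `l ∈ 𝔩`, then
`j(𝔩) = 𝔩`. -/
theorem stmt_6 (t : ℕ+) (ht : (t : ℕ).Prime) (hodd : Odd (t : ℕ))
    (ζ : CyclotomicField t ℚ) (hζ : IsPrimitiveRoot ζ (t : ℕ))
    (l : ℕ) (hl : l.Prime) (hlt : l ≠ (t : ℕ))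
    (hl1 : (-1 : ZMod t) ∈ Submonoid.powers ((l : ℕ) : ZMod t))
    (j : CyclotomicField t ℚ ≃ₐ[ℚ] CyclotomicField t ℚ) (hj : j ζ = ζ⁻¹)
    (𝔩 : Ideal (𝓞 (CyclotomicField t ℚ))) (h𝔩 : 𝔩.IsPrime)
    (hl𝔩 : (l : 𝓞 (CyclotomicField t ℚ)) ∈ 𝔩) :
    Ideal.map (RingOfIntegers.mapRingHom (j : CyclotomicField t ℚ →+* CyclotomicField t ℚ)) 𝔩 = 𝔩 := by
  haveI : Fact (t : ℕ).Prime := ⟨ht⟩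
  haveI : Fact l.Prime := ⟨hl⟩
  obtain ⟨k, hk⟩ := hl1
  -- `j ζ = ζ ^ l ^ k`
  have hζt : ζ ^ (t : ℕ) = 1 := hζ.pow_eq_one
  have htpos : 0 < (t : ℕ) := t.pos
  have h1t : 1 ≤ (t : ℕ) := htpos
  have hmod : l ^ k % (t : ℕ) = ((t : ℕ) - 1) % (t : ℕ) := by
    have hcast : ((l ^ k : ℕ) : ZMod t) = (((t : ℕ) - 1 : ℕ) : ZMod t) := by
      rw [Nat.cast_sub h1t]
      push_cast
      rw [show ((l:ZMod t))^k = -1 from hk, ZMod.natCast_self]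
      ring
    exact (ZMod.natCast_eq_natCast_iff _ _ _).mp hcast
  have hinv : ζ ^ ((t : ℕ) - 1) = ζ⁻¹ := by
    have : ζ ^ ((t : ℕ) - 1) * ζ = 1 := by
      rw [← pow_succ, Nat.sub_add_cancel h1t, hζt]
    exact (inv_eq_of_mul_eq_one_right (by rwa [mul_comm] at this)).symm
  have hjζ : j ζ = ζ ^ l ^ k := by
    rw [hj, pow_eq_pow_mod _ hζt, hmod, Nat.mod_eq_of_lt (by omega), hinv]
  -- integer version of ζ
  set ζO : 𝓞 (CyclotomicField t ℚ) := hζ.toInteger with hζO_def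
  have hjζO : RingOfIntegers.mapRingHom j ζO = ζO ^ l ^ k := by
    apply RingOfIntegers.ext
    push_cast [RingOfIntegers.mapRingHom, hζO_def]
    exact hjζ
  haveI := h𝔩
  haveI : NeZero (((t : ℕ)) : ℚ) := ⟨by exact_mod_cast t.ne_zero⟩
  haveI : IsCyclotomicExtension {(t : ℕ)} ℚ (CyclotomicField t ℚ) :=
    CyclotomicField.isCyclotomicExtension (n := (t : ℕ)) (K := ℚ)
  haveI : NumberField (CyclotomicField t ℚ) := inferInstance
  have hl0 : ((l : ℕ) : (𝓞 (CyclotomicField t ℚ)) ⧸ 𝔩) = 0 := by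
    rw [← map_natCast (Ideal.Quotient.mk 𝔩)]
    exact Ideal.Quotient.eq_zero_iff_mem.mpr hl𝔩
  haveI hcharR : CharP ((𝓞 (CyclotomicField t ℚ)) ⧸ 𝔩) l := by
    rcases (Nat.dvd_prime hl).1 (ringChar.dvd hl0) with h1 | h1
    · haveI := ringChar.of_eq h1
      exact absurd CharP.CharOne.subsingleton (not_subsingleton ((𝓞 (CyclotomicField t ℚ)) ⧸ 𝔩))
    · exact h1 ▸ ringChar.charP _
  haveI : ExpChar ((𝓞 (CyclotomicField t ℚ)) ⧸ 𝔩) l := ExpChar.prime hl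
  set φ := Ideal.Quotient.mk 𝔩 with hφ
  set F := φ.comp (RingOfIntegers.mapRingHom (j : CyclotomicField t ℚ →+* CyclotomicField t ℚ)) with hF
  set G := (iterateFrobenius ((𝓞 (CyclotomicField t ℚ)) ⧸ 𝔩) l k).comp φ with hG
  have hFG : F = G := by
    have hgen : F.toIntAlgHom hζ.integralPowerBasis.gen =
        G.toIntAlgHom hζ.integralPowerBasis.gen := by
      rw [hζ.integralPowerBasis_gen]
      show F ζO = G ζO
      rw [hF, hG]
      simp only [RingHom.comp_apply, hjζO, map_pow, iterateFrobenius_def]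
    have := (hζ.integralPowerBasis).algHom_ext hgen
    exact congrArg AlgHom.toRingHom this
  have key : 𝔩 ≤ Ideal.comap (RingOfIntegers.mapRingHom (j : CyclotomicField t ℚ →+* CyclotomicField t ℚ)) 𝔩 := by
    intro x hx
    have hFGx : F x = G x := by rw [hFG]
    rw [hF, hG] at hFGx
    simp only [RingHom.comp_apply, iterateFrobenius_def] at hFGx
    rw [Ideal.Quotient.eq_zero_iff_mem.mpr hx, zero_pow (pow_ne_zero _ hl.ne_zero)] at hFGx
    rw [Ideal.mem_comap]
    exact Ideal.Quotient.eq_zero_iff_mem.mp hFGx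
  have hbot : 𝔩 ≠ ⊥ := by
    intro h
    rw [h, Ideal.mem_bot] at hl𝔩
    exact hl.ne_zero (Nat.cast_eq_zero.mp hl𝔩)
  have hmax : 𝔩.IsMaximal := Ideal.IsPrime.isMaximal h𝔩 hbot
  have hcomap_ne_top : Ideal.comap (RingOfIntegers.mapRingHom (j : CyclotomicField t ℚ →+* CyclotomicField t ℚ)) 𝔩 ≠ ⊤ := by
    intro h
    refine h𝔩.ne_top (Ideal.eq_top_iff_one _ |>.mpr ?_)
    have h1 : (1 : 𝓞 (CyclotomicField t ℚ)) ∈ Ideal.comap (RingOfIntegers.mapRingHom (j : CyclotomicField t ℚ →+* CyclotomicField t ℚ)) 𝔩 := by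
      rw [h]; trivial
    simpa using h1
  have heq : 𝔩 = Ideal.comap (RingOfIntegers.mapRingHom (j : CyclotomicField t ℚ →+* CyclotomicField t ℚ)) 𝔩 := hmax.eq_of_le hcomap_ne_top key
  have hsurj : Function.Surjective (RingOfIntegers.mapRingHom (j : CyclotomicField t ℚ →+* CyclotomicField t ℚ)) := fun y =>
    ⟨RingOfIntegers.mapRingHom (j.symm : CyclotomicField t ℚ ≃ₐ[ℚ] CyclotomicField t ℚ) y, by
      apply RingOfIntegers.ext
      push_cast [RingOfIntegers.mapRingHom]
      exact j.apply_symm_apply _⟩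
  conv_lhs => rw [heq]
  exact Ideal.map_comap_of_surjective _ hsurj 𝔩
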